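/- Let Σ ∈ ℝ^{m×m} be symmetric positive definite and θ ∈ ℝ^m. Then the function F: (0, ∞) → ℝ defined by F(τ) := τ² ‖(Σ + τI)^{-1} Σ^{1/2} θ‖₂² is differentiable, and for every τ > 0 its derivative equals F'(τ) = 2τ · θᵀ (Σ + τI)^{-3} Σ² θ. In particular F'(τ) ≥ 0, and F'(τ) ≥ (2/τ) · (λmin(Σ)/(λmin(Σ) + τ)) · F(τ). -/

import Mathlib

open Matrix

noncomputable section

/-- The positive semidefinite square root of a positive semidefinite matrix
(the definition `Matrix.PosSemidef.sqrt` of the older Mathlib, since removed). -/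
def Matrix.PosSemidef.sqrt {n 𝕜 : Type*} [Fintype n] [DecidableEq n] [RCLike 𝕜] [PartialOrder 𝕜]
    {A : Matrix n n 𝕜} (hA : A.PosSemidef) : Matrix n n 𝕜 :=
  (hA.1.eigenvectorUnitary : Matrix n n 𝕜) * diagonal ((↑) ∘ (√·) ∘ hA.1.eigenvalues) *
    (star hA.1.eigenvectorUnitary : Matrix n n 𝕜)

/-- Squared Euclidean norm of a vector. -/
def sqNorm {m : Type*} [Fintype m] (v : m → ℝ) : ℝ := ∑ i, v i ^ 2

/-- Smallest eigenvalue of a symmetric matrix, via the Rayleigh quotient. -/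
def lmin {m : Type*} [Fintype m] (A : Matrix m m ℝ) : ℝ :=
  ⨅ v : {v : m → ℝ // sqNorm v = 1}, dotProduct v.1 (A.mulVec v.1)

namespace BiasAux

variable {n : Type*} [Fintype n] [DecidableEq n]
variable {A : Matrix n n ℝ} (hA : A.IsHermitian)

/-- Conjugation of a diagonal matrix by the eigenvector unitary. -/
def Cg (d : n → ℝ) : Matrix n n ℝ :=
  (hA.eigenvectorUnitary : Matrix n n ℝ) * diagonal d *
    star (hA.eigenvectorUnitary : Matrix n n ℝ)

lemma star_mul_self_eq_one :
    star (hA.eigenvectorUnitary : Matrix n n ℝ) * (hA.eigenvectorUnitary : Matrix n n ℝ) = 1 :=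
  Unitary.coe_star_mul_self hA.eigenvectorUnitary

lemma mul_star_self_eq_one :
    (hA.eigenvectorUnitary : Matrix n n ℝ) * star (hA.eigenvectorUnitary : Matrix n n ℝ) = 1 :=
  Unitary.coe_mul_star_self hA.eigenvectorUnitary

lemma Cg_mul (d e : n → ℝ) : Cg hA d * Cg hA e = Cg hA (d * e) := by
  unfold Cg
  rw [mul_assoc (_ * diagonal d), ← mul_assoc (star _), ← mul_assoc (star _),
    star_mul_self_eq_one, one_mul, ← mul_assoc, mul_assoc _ (diagonal d),
    diagonal_mul_diagonal]
  rfl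

lemma Cg_one : Cg hA 1 = 1 := by
  unfold Cg
  rw [show diagonal (1 : n → ℝ) = 1 from diagonal_one, mul_one, mul_star_self_eq_one]

lemma A_eq_Cg : A = Cg hA hA.eigenvalues := by
  unfold Cg
  convert hA.spectral_theorem using 3
  rw [Unitary.conjStarAlgAut_apply]
  rfl

lemma Cg_add_const (d : n → ℝ) (c : ℝ) :
    Cg hA (fun i => d i + c) = Cg hA d + c • 1 := by
  unfold Cg
  have h1 : diagonal (fun i => d i + c) = diagonal d + c • (1 : Matrix n n ℝ) := by
    rw [smul_one_eq_diagonal, ← diagonal_add]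
  rw [h1, mul_add, add_mul, Matrix.mul_smul, Matrix.smul_mul, mul_one,
    mul_star_self_eq_one]

lemma Cg_inv (d : n → ℝ) (hd : ∀ i, d i ≠ 0) : (Cg hA d)⁻¹ = Cg hA d⁻¹ := by
  apply Matrix.inv_eq_right_inv
  rw [Cg_mul]
  have : d * d⁻¹ = 1 := by
    funext i; exact mul_inv_cancel₀ (hd i)
  rw [this, Cg_one]

lemma quad (e : n → ℝ) (θ : n → ℝ) :
    θ ⬝ᵥ (Cg hA e *ᵥ θ) =
      ∑ i, e i * ((star (hA.eigenvectorUnitary : Matrix n n ℝ) *ᵥ θ) i) ^ 2 := by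
  unfold Cg
  set U : Matrix n n ℝ := (hA.eigenvectorUnitary : Matrix n n ℝ) with hU
  set w : n → ℝ := star U *ᵥ θ with hw
  have hUs : star U = Uᵀ := by
    rw [Matrix.star_eq_conjTranspose, conjTranspose_eq_transpose_of_trivial]
  have h1 : (U * diagonal e * star U) *ᵥ θ = U *ᵥ (diagonal e *ᵥ w) := by
    rw [mulVec_mulVec, mulVec_mulVec, mul_assoc]
  rw [h1, dotProduct_mulVec, ← mulVec_transpose, ← hUs, ← hw]
  simp only [dotProduct, mulVec_diagonal]
  exact Finset.sum_congr rfl fun i _ => by ring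

lemma sq_norm_Cg (d : n → ℝ) (θ : n → ℝ) :
    sqNorm (Cg hA d *ᵥ θ) =
      ∑ i, d i ^ 2 * ((star (hA.eigenvectorUnitary : Matrix n n ℝ) *ᵥ θ) i) ^ 2 := by
  have hsym : (Cg hA d)ᵀ = Cg hA d := by
    unfold Cg
    rw [Matrix.star_eq_conjTranspose, conjTranspose_eq_transpose_of_trivial,
      transpose_mul, transpose_mul, transpose_transpose, diagonal_transpose, mul_assoc]
  have h1 : sqNorm (Cg hA d *ᵥ θ) = θ ⬝ᵥ ((Cg hA d * Cg hA d) *ᵥ θ) := by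
    rw [← mulVec_mulVec]
    rw [dotProduct_mulVec, ← mulVec_transpose, hsym]
    unfold sqNorm dotProduct
    exact Finset.sum_congr rfl fun i _ => pow_two _
  rw [h1, Cg_mul, quad]
  exact Finset.sum_congr rfl fun i _ => by rw [Pi.mul_apply]; ring

end BiasAux

open BiasAux

/-- Derivative of the bias term of the ridge-regression test loss:
`F(τ) = τ²‖(Σ + τI)⁻¹ Σ^{1/2} θ‖²` has derivative `F'(τ) = 2τ θᵀ(Σ + τI)⁻³ Σ² θ ≥ 0`, with
`F'(τ) ≥ (2/τ)(λmin(Σ)/(λmin(Σ) + τ)) F(τ)`. -/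
theorem bias_term_derivative
    (m : ℕ) (Sig : Matrix (Fin m) (Fin m) ℝ) (hpd : Sig.PosDef)
    (θ : Fin m → ℝ)
    (F : ℝ → ℝ)
    (hF : ∀ τ : ℝ, F τ =
      τ ^ 2 * sqNorm (((Sig + τ • 1)⁻¹ * hpd.posSemidef.sqrt).mulVec θ)) :
    ∀ τ : ℝ, 0 < τ →
      HasDerivAt F
        (2 * τ * dotProduct θ ((((Sig + τ • 1)⁻¹) ^ 3 * Sig ^ 2).mulVec θ)) τ ∧
      0 ≤ 2 * τ * dotProduct θ ((((Sig + τ • 1)⁻¹) ^ 3 * Sig ^ 2).mulVec θ) ∧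
      (2 / τ) * (lmin Sig / (lmin Sig + τ)) * F τ ≤
        2 * τ * dotProduct θ ((((Sig + τ • 1)⁻¹) ^ 3 * Sig ^ 2).mulVec θ) := by
  have hA : Sig.IsHermitian := hpd.posSemidef.1
  have hlampos : ∀ i, 0 < hA.eigenvalues i := fun i => hpd.eigenvalues_pos i
  -- the square root as a conjugated diagonal
  have hsqrt : hpd.posSemidef.sqrt = Cg hA (fun i => Real.sqrt (hA.eigenvalues i)) := by
    rw [Matrix.PosSemidef.sqrt]
    unfold Cg
    congr 2
  -- resolvent at positive τ
  have hres : ∀ τ : ℝ, 0 < τ → (Sig + τ • 1)⁻¹ = Cg hA (fun i => (hA.eigenvalues i + τ)⁻¹) := by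
    intro τ hτ
    have h1 : Sig + τ • 1 = Cg hA (fun i => hA.eigenvalues i + τ) := by
      rw [Cg_add_const, ← A_eq_Cg]
    rw [h1, Cg_inv hA _ (fun i =>
      ne_of_gt (show (0:ℝ) < hA.eigenvalues i + τ by have := hlampos i; linarith))]
    rfl
  have hSig2 : Sig ^ 2 = Cg hA (fun i => hA.eigenvalues i ^ 2) := by
    have h := congrArg (fun M : Matrix (Fin m) (Fin m) ℝ => M * M) (A_eq_Cg hA)
    rw [Cg_mul] at h
    have hfun : hA.eigenvalues * hA.eigenvalues = fun i => hA.eigenvalues i ^ 2 := by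
      funext i
      exact (pow_two _).symm
    rw [pow_two, h, hfun]
  -- the quadratic form identity for the derivative expression
  have hquad : ∀ τ : ℝ, 0 < τ →
      dotProduct θ ((((Sig + τ • 1)⁻¹) ^ 3 * Sig ^ 2).mulVec θ) =
        ∑ i, ((hA.eigenvalues i + τ)⁻¹) ^ 3 * (hA.eigenvalues i) ^ 2 *
          ((star (hA.eigenvectorUnitary : Matrix (Fin m) (Fin m) ℝ) *ᵥ θ) i) ^ 2 := by
    intro τ hτ
    have h2 : (((Sig + τ • 1)⁻¹) ^ 3 * Sig ^ 2)
        = Cg hA (fun i => ((hA.eigenvalues i + τ)⁻¹) ^ 3 * (hA.eigenvalues i) ^ 2) := by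
      have hfun : ((fun i => (hA.eigenvalues i + τ)⁻¹) * (fun i => (hA.eigenvalues i + τ)⁻¹)
            * (fun i => (hA.eigenvalues i + τ)⁻¹)) * (fun i => hA.eigenvalues i ^ 2)
          = fun i => ((hA.eigenvalues i + τ)⁻¹) ^ 3 * (hA.eigenvalues i) ^ 2 := by
        funext i
        simp only [Pi.mul_apply]
        ring
      rw [hres τ hτ, hSig2, pow_succ, pow_succ, pow_one, Cg_mul, Cg_mul, Cg_mul, hfun]
    rw [h2, quad]
  -- F as an explicit rational function on (0, ∞)
  have hFval : ∀ τ : ℝ, 0 < τ →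
      F τ = ∑ i, ((star (hA.eigenvectorUnitary : Matrix (Fin m) (Fin m) ℝ) *ᵥ θ) i) ^ 2 *
        (τ ^ 2 * hA.eigenvalues i / (hA.eigenvalues i + τ) ^ 2) := by
    intro τ hτ
    rw [hF τ, hres τ hτ, hsqrt, Cg_mul, sq_norm_Cg, Finset.mul_sum]
    refine Finset.sum_congr rfl fun i _ => ?_
    have h1 : (0:ℝ) < hA.eigenvalues i + τ := by have := hlampos i; linarith
    have h2 : Real.sqrt (hA.eigenvalues i) ^ 2 = hA.eigenvalues i := Real.sq_sqrt (hlampos i).le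
    simp only [Pi.mul_apply, mul_pow, h2]
    field_simp
  intro τ hτ
  -- derivative of the explicit formula
  have hG : HasDerivAt
      (fun t => ∑ i, ((star (hA.eigenvectorUnitary : Matrix (Fin m) (Fin m) ℝ) *ᵥ θ) i) ^ 2 *
        (t ^ 2 * hA.eigenvalues i / (hA.eigenvalues i + t) ^ 2))
      (∑ i, ((star (hA.eigenvectorUnitary : Matrix (Fin m) (Fin m) ℝ) *ᵥ θ) i) ^ 2 *
        (2 * τ * (hA.eigenvalues i) ^ 2 / (hA.eigenvalues i + τ) ^ 3)) τ := by
    apply HasDerivAt.fun_sum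
    intro i _
    have h1 : (0:ℝ) < hA.eigenvalues i + τ := by have := hlampos i; linarith
    have hnum : HasDerivAt (fun t : ℝ => t ^ 2 * hA.eigenvalues i)
        (2 * τ * hA.eigenvalues i) τ := by
      simpa using (hasDerivAt_pow 2 τ).mul_const (hA.eigenvalues i)
    have hden : HasDerivAt (fun t : ℝ => (hA.eigenvalues i + t) ^ 2)
        (2 * (hA.eigenvalues i + τ)) τ := by
      simpa using (((hasDerivAt_id τ).const_add (hA.eigenvalues i)).fun_pow 2)
    have hdiv := hnum.div hden (by positivity)
    have heq : (2 * τ * hA.eigenvalues i * (hA.eigenvalues i + τ) ^ 2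
          - τ ^ 2 * hA.eigenvalues i * (2 * (hA.eigenvalues i + τ)))
        / ((hA.eigenvalues i + τ) ^ 2) ^ 2
        = 2 * τ * (hA.eigenvalues i) ^ 2 / (hA.eigenvalues i + τ) ^ 3 := by
      field_simp
      ring
    rw [heq] at hdiv
    exact hdiv.const_mul _
  have hFeq : F =ᶠ[nhds τ]
      (fun t => ∑ i, ((star (hA.eigenvectorUnitary : Matrix (Fin m) (Fin m) ℝ) *ᵥ θ) i) ^ 2 *
        (t ^ 2 * hA.eigenvalues i / (hA.eigenvalues i + t) ^ 2)) := by
    filter_upwards [Ioi_mem_nhds hτ] with t ht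
    exact hFval t ht
  have hderiv : HasDerivAt F
      (2 * τ * dotProduct θ ((((Sig + τ • 1)⁻¹) ^ 3 * Sig ^ 2).mulVec θ)) τ := by
    have heq2 : (2 * τ * dotProduct θ ((((Sig + τ • 1)⁻¹) ^ 3 * Sig ^ 2).mulVec θ))
        = ∑ i, ((star (hA.eigenvectorUnitary : Matrix (Fin m) (Fin m) ℝ) *ᵥ θ) i) ^ 2 *
          (2 * τ * (hA.eigenvalues i) ^ 2 / (hA.eigenvalues i + τ) ^ 3) := by
      rw [hquad τ hτ, Finset.mul_sum]
      refine Finset.sum_congr rfl fun i _ => ?_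
      have h1 : (0:ℝ) < hA.eigenvalues i + τ := by have := hlampos i; linarith
      field_simp
    rw [heq2]
    exact hG.congr_of_eventuallyEq hFeq
  -- nonnegativity
  have hnonneg : 0 ≤ 2 * τ * dotProduct θ ((((Sig + τ • 1)⁻¹) ^ 3 * Sig ^ 2).mulVec θ) := by
    rw [hquad τ hτ]
    refine mul_nonneg (by positivity) (Finset.sum_nonneg fun i _ => ?_)
    have h1 : (0:ℝ) < hA.eigenvalues i + τ := by have := hlampos i; linarith
    exact mul_nonneg (mul_nonneg (pow_nonneg (inv_nonneg.mpr h1.le) 3) (sq_nonneg _))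
      (sq_nonneg _)
  refine ⟨hderiv, hnonneg, ?_⟩
  -- facts about lmin
  have hlmin_nonneg : 0 ≤ lmin Sig := by
    apply Real.iInf_nonneg
    rintro ⟨v, hv⟩
    have hvne : v ≠ 0 := by
      intro h
      rw [h] at hv
      simp [sqNorm] at hv
    have := hpd.re_dotProduct_pos hvne
    simpa using this.le
  have hlmin_le : ∀ i, lmin Sig ≤ hA.eigenvalues i := by
    intro i
    set v : Fin m → ℝ := ⇑(hA.eigenvectorBasis i) with hv
    have hnorm : ‖hA.eigenvectorBasis i‖ = 1 := hA.eigenvectorBasis.orthonormal.1 i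
    have hsq : sqNorm v = 1 := by
      have h1 := EuclideanSpace.norm_eq (hA.eigenvectorBasis i)
      rw [hnorm] at h1
      have h3 : (∑ j, ‖hA.eigenvectorBasis i j‖ ^ 2) = 1 := Real.sqrt_eq_one.mp h1.symm
      unfold sqNorm
      rw [← h3]
      exact Finset.sum_congr rfl fun j _ => by
        rw [Real.norm_eq_abs, sq_abs]
    have hray : dotProduct v (Sig.mulVec v) = hA.eigenvalues i := by
      rw [hv, hA.mulVec_eigenvectorBasis]
      have h4 : dotProduct (⇑(hA.eigenvectorBasis i)) (hA.eigenvalues i • ⇑(hA.eigenvectorBasis i))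
          = hA.eigenvalues i * sqNorm v := by
        unfold sqNorm dotProduct
        rw [Finset.mul_sum]
        exact Finset.sum_congr rfl fun j _ => by
          simp [hv]
          ring
      rw [h4, hsq, mul_one]
    have hbdd : BddBelow (Set.range fun v : {v : Fin m → ℝ // sqNorm v = 1} =>
        dotProduct v.1 (Sig.mulVec v.1)) := by
      refine ⟨0, ?_⟩
      rintro x ⟨⟨u, hu⟩, rfl⟩
      have hune : u ≠ 0 := by
        intro h
        rw [h] at hu
        simp [sqNorm] at hu
      have := hpd.re_dotProduct_pos hune
      simpa using this.le
    have hle := ciInf_le hbdd (⟨v, hsq⟩ : {v : Fin m → ℝ // sqNorm v = 1})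
    rw [hray] at hle
    exact hle
  -- the final inequality, termwise
  rw [hquad τ hτ, hFval τ hτ, Finset.mul_sum, Finset.mul_sum]
  apply Finset.sum_le_sum
  intro i _
  set wv := ((star (hA.eigenvectorUnitary : Matrix (Fin m) (Fin m) ℝ) *ᵥ θ) i) with hwv
  set l := lmin Sig with hl
  have h1 : (0:ℝ) < hA.eigenvalues i + τ := by have := hlampos i; linarith
  have h2 : (0:ℝ) < l + τ := by linarith [hlmin_nonneg]
  have hkey : l / (l + τ) ≤ hA.eigenvalues i / (hA.eigenvalues i + τ) := by
    rw [div_le_div_iff₀ h2 h1]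
    nlinarith [hlmin_le i, hlmin_nonneg]
  have hLHS : 2 / τ * (l / (l + τ)) * (wv ^ 2 * (τ ^ 2 * hA.eigenvalues i / (hA.eigenvalues i + τ) ^ 2))
      = (l / (l + τ)) * (2 * τ * hA.eigenvalues i / (hA.eigenvalues i + τ) ^ 2 * wv ^ 2) := by
    field_simp
  have hRHS : 2 * τ * (((hA.eigenvalues i + τ)⁻¹) ^ 3 * (hA.eigenvalues i) ^ 2 * wv ^ 2)
      = (hA.eigenvalues i / (hA.eigenvalues i + τ)) *
        (2 * τ * hA.eigenvalues i / (hA.eigenvalues i + τ) ^ 2 * wv ^ 2) := by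
    field_simp
  rw [hLHS, hRHS]
  apply mul_le_mul_of_nonneg_right hkey
  have h5 : (0:ℝ) ≤ 2 * τ * hA.eigenvalues i := by nlinarith [hlampos i]
  exact mul_nonneg (div_nonneg h5 (by positivity)) (sq_nonneg _)

end
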